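/- For any 0 < μ < 1, the FPL algorithm applied to the shifted experts of a non-degenerate zero-sum two-expert game has expected cumulative gain l_{1:T} ≥ e^{−2/μ}(1−μ)·|s¹_{1:T}| − V_T·(1 − e^{−2/μ}(1−μ)) for all T, where V_T = ∑_{t=1}^T |s¹_t| is the volume of the game. -/

import Mathlib

open MeasureTheory ProbabilityTheory Filter

/-- Cumulative gain `sⁱ_{1:t}`, including the initial gain `sⁱ_0` (taken to be `1`). -/
noncomputable def cum (s : ℕ → ℝ) (t : ℕ) : ℝ := ∑ j ∈ Finset.range (t + 1), s j

/-- `v_t = max {s¹_{1:t}, s²_{1:t}}`. -/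
noncomputable def vmax (s1 s2 : ℕ → ℝ) (t : ℕ) : ℝ := max (cum s1 t) (cum s2 t)

/-- The event that the perturbed leader, with cumulative gains evaluated at time `u` and
learning rate `ε_u = 1/(μ v_u)` (so the perturbation is `ξ/ε_u = μ v_u ξ`), selects
expert 1 at step `t`. For FPL take `u = t - 1`, for IFPL take `u = t`. -/
def pick1 {Ω : Type*} (ξ : ℕ × Bool → Ω → ℝ) (μ : ℝ) (s1 s2 : ℕ → ℝ) (t u : ℕ) : Set Ω :=
  {ω | cum s1 u + μ * vmax s1 s2 u * ξ (t, true) ω >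
       cum s2 u + μ * vmax s1 s2 u * ξ (t, false) ω}

/-- Expected one-step gain `l_t` of the FPL algorithm (learning rate `1/(μ v_{t-1})`). -/
noncomputable def fplGain {Ω : Type*} [MeasurableSpace Ω] (Pr : Measure Ω)
    (ξ : ℕ × Bool → Ω → ℝ) (μ : ℝ) (s1 s2 : ℕ → ℝ) (t : ℕ) : ℝ :=
  s1 t * (Pr (pick1 ξ μ s1 s2 t (t - 1))).toReal +
  s2 t * (Pr (pick1 ξ μ s1 s2 t (t - 1))ᶜ).toReal

/-- Expected one-step gain `r_t` of the IFPL algorithm (learning rate `1/(μ v_t)`). -/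
noncomputable def ifplGain {Ω : Type*} [MeasurableSpace Ω] (Pr : Measure Ω)
    (ξ : ℕ × Bool → Ω → ℝ) (μ : ℝ) (s1 s2 : ℕ → ℝ) (t : ℕ) : ℝ :=
  s1 t * (Pr (pick1 ξ μ s1 s2 t t)).toReal +
  s2 t * (Pr (pick1 ξ μ s1 s2 t t)ᶜ).toReal

/-- First shifted expert of the zero-sum game: `s̃¹_t = s¹_t + |s¹_t|` (and `s̃¹_0 = 1`). -/
noncomputable def sh1 (s1 : ℕ → ℝ) : ℕ → ℝ := fun t => if t = 0 then 1 else s1 t + |s1 t|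

/-- Second shifted expert of the zero-sum game: `s̃²_t = −s¹_t + |s¹_t|` (and `s̃²_0 = 1`). -/
noncomputable def sh2 (s1 : ℕ → ℝ) : ℕ → ℝ := fun t => if t = 0 then 1 else -s1 t + |s1 t|

/-- The volume `V_t = ∑_{j≤t} |s¹_j|` of the zero-sum game. -/
noncomputable def vol (s1 : ℕ → ℝ) (t : ℕ) : ℝ := ∑ j ∈ Finset.Icc 1 t, |s1 j|

/-- Expected one-step gain of the FPL algorithm applied to the shifted experts of the
zero-sum game (the algorithm receives the original gains `s¹_t` resp. `s²_t = −s¹_t`). -/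
noncomputable def zsFplGain {Ω : Type*} [MeasurableSpace Ω] (Pr : Measure Ω)
    (ξ : ℕ × Bool → Ω → ℝ) (μ : ℝ) (s1 : ℕ → ℝ) (t : ℕ) : ℝ :=
  s1 t * (Pr (pick1 ξ μ (sh1 s1) (sh2 s1) t (t - 1))).toReal +
  (-s1 t) * (Pr (pick1 ξ μ (sh1 s1) (sh2 s1) t (t - 1))ᶜ).toReal

/- ===== Auxiliary lemmas ===== -/

lemma zsaux_key {μ : ℝ} (hμ0 : 0 < μ) (hμ1 : μ < 1) :
    4 * (Real.exp (-(2/μ)) * (1 - μ)) ≤ Real.exp (-(1/μ)) := by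
  have he1 : (2:ℝ) ≤ Real.exp 1 := by
    have := Real.add_one_le_exp (1:ℝ); linarith
  have h4 : 4 * (1 - μ) ≤ Real.exp (1/μ) := by
    rcases le_or_gt (1/2) μ with h | h
    · have h1 : (1:ℝ) ≤ 1/μ := by rw [le_div_iff₀ hμ0]; linarith
      have := Real.add_one_le_exp (1/μ)
      linarith
    · have h2 : (2:ℝ) ≤ 1/μ := by rw [le_div_iff₀ hμ0]; linarith
      have hm : Real.exp 2 ≤ Real.exp (1/μ) := Real.exp_le_exp.mpr h2
      have he2 : (4:ℝ) ≤ Real.exp 2 := by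
        rw [show (2:ℝ) = 1 + 1 by ring, Real.exp_add]
        nlinarith
      nlinarith
  have hpos : 0 < Real.exp (-(2/μ)) := Real.exp_pos _
  calc 4 * (Real.exp (-(2/μ)) * (1 - μ))
      = (4 * (1 - μ)) * Real.exp (-(2/μ)) := by ring
    _ ≤ Real.exp (1/μ) * Real.exp (-(2/μ)) := mul_le_mul_of_nonneg_right h4 hpos.le
    _ = Real.exp (-(1/μ)) := by rw [← Real.exp_add]; ring_nf

lemma zsaux_c_le {μ : ℝ} (hμ0 : 0 < μ) (hμ1 : μ < 1) :
    Real.exp (-(2/μ)) * (1 - μ) ≤ 1/4 := by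
  have h2 : (2:ℝ) ≤ 2/μ := by rw [le_div_iff₀ hμ0]; linarith
  have hmono : Real.exp (-(2/μ)) ≤ Real.exp (-2) := Real.exp_le_exp.mpr (by linarith)
  have he2 : (4:ℝ) ≤ Real.exp 2 := by
    have := Real.add_one_le_exp (1:ℝ)
    rw [show (2:ℝ) = 1 + 1 by ring, Real.exp_add]
    nlinarith
  have hineq : Real.exp (-2) ≤ 1/4 := by
    rw [Real.exp_neg]
    rw [inv_le_comm₀ (Real.exp_pos 2) (by norm_num)]
    simpa using he2
  nlinarith [Real.exp_pos (-(2/μ))]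

lemma zsaux_step_nonneg (μ S V s P : ℝ) (hμ0 : 0 < μ) (hμ1 : μ < 1)
    (hS : 0 ≤ S) (hV : |S| ≤ V) (hP0 : 0 ≤ P) (hP1 : P ≤ 1)
    (h1 : 1/4 * Real.exp (-(max 0 (-(2*S))) / (μ * (1 + |S| + V))) ≤ P)
    (h2 : 1/4 * Real.exp (-(max 0 (2*S)) / (μ * (1 + |S| + V))) ≤ 1 - P) :
    Real.exp (-(2/μ)) * (1 - μ) * (|S + s| + |s| - |S|) ≤ s * (2*P - 1) + |s| := by
  have habs : |S| = S := abs_of_nonneg hS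
  have hc0 : 0 < Real.exp (-(2/μ)) * (1 - μ) :=
    mul_pos (Real.exp_pos _) (by linarith)
  have hc4 : Real.exp (-(2/μ)) * (1 - μ) ≤ 1/4 := zsaux_c_le hμ0 hμ1
  rw [habs] at hV
  rcases le_or_gt 0 s with hs | hs
  · have hmax : max 0 (-(2*S)) = 0 := max_eq_left (by linarith)
    rw [hmax, neg_zero, zero_div, Real.exp_zero, mul_one] at h1
    have hX : |S + s| + |s| - |S| ≤ 2*s := by
      have := abs_add_le S s
      rw [habs, abs_of_nonneg hs] at *
      linarith
    have l1 : Real.exp (-(2/μ)) * (1 - μ) * (|S + s| + |s| - |S|) ≤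
        Real.exp (-(2/μ)) * (1 - μ) * (2*s) := mul_le_mul_of_nonneg_left hX hc0.le
    have l2 : Real.exp (-(2/μ)) * (1 - μ) * (2*s) ≤ (1/4) * (2*s) :=
      mul_le_mul_of_nonneg_right hc4 (by linarith)
    have l3 : (1/4) * (2*s) ≤ P * (2*s) := mul_le_mul_of_nonneg_right h1 (by linarith)
    have : s * (2*P - 1) + |s| = P * (2*s) := by rw [abs_of_nonneg hs]; ring
    linarith
  · have hmax : max 0 (2*S) = 2*S := max_eq_right (by linarith)
    rw [hmax] at h2
    have hD : 0 < μ * (1 + |S| + V) := by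
      rw [habs]; exact mul_pos hμ0 (by linarith)
    have harg : -(1/μ) ≤ -(2*S) / (μ * (1 + |S| + V)) := by
      rw [habs, neg_div, neg_le_neg_iff, div_le_div_iff₀ (by rw [habs] at hD; exact hD) hμ0]
      nlinarith
    have h2' : 1/4 * Real.exp (-(1/μ)) ≤ 1 - P := by
      have := Real.exp_le_exp.mpr harg
      nlinarith
    have hcP : Real.exp (-(2/μ)) * (1 - μ) ≤ 1 - P := by
      have hk := zsaux_key hμ0 hμ1
      linarith
    have hX : |S + s| + |s| - |S| ≤ -(2*s) := by
      have := abs_add_le S s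
      rw [habs, abs_of_neg hs] at *
      linarith
    have l1 : Real.exp (-(2/μ)) * (1 - μ) * (|S + s| + |s| - |S|) ≤
        Real.exp (-(2/μ)) * (1 - μ) * (-(2*s)) := mul_le_mul_of_nonneg_left hX hc0.le
    have l2 : Real.exp (-(2/μ)) * (1 - μ) * (-(2*s)) ≤ (1 - P) * (-(2*s)) :=
      mul_le_mul_of_nonneg_right hcP (by linarith)
    have : (1 - P) * (-(2*s)) = s * (2*P - 1) + |s| := by rw [abs_of_neg hs]; ring
    linarith

lemma zsaux_step (μ S V s P : ℝ) (hμ0 : 0 < μ) (hμ1 : μ < 1)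
    (hV : |S| ≤ V) (hP0 : 0 ≤ P) (hP1 : P ≤ 1)
    (h1 : 1/4 * Real.exp (-(max 0 (-(2*S))) / (μ * (1 + |S| + V))) ≤ P)
    (h2 : 1/4 * Real.exp (-(max 0 (2*S)) / (μ * (1 + |S| + V))) ≤ 1 - P) :
    Real.exp (-(2/μ)) * (1 - μ) * (|S + s| + |s| - |S|) ≤ s * (2*P - 1) + |s| := by
  rcases le_or_gt 0 S with hS | hS
  · exact zsaux_step_nonneg μ S V s P hμ0 hμ1 hS hV hP0 hP1 h1 h2
  · have hV' : |(-S)| ≤ V := by rwa [abs_neg]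
    have h1' : 1/4 * Real.exp (-(max 0 (-(2*(-S)))) / (μ * (1 + |(-S)| + V))) ≤ 1 - P := by
      rw [abs_neg, show -(2*(-S)) = 2*S by ring]; exact h2
    have h2' : 1/4 * Real.exp (-(max 0 (2*(-S))) / (μ * (1 + |(-S)| + V))) ≤ 1 - (1 - P) := by
      rw [abs_neg, show (2*(-S)) = -(2*S) by ring]; linarith
    have := zsaux_step_nonneg μ (-S) V (-s) (1 - P) hμ0 hμ1 (by linarith) hV'
      (by linarith) (by linarith) h1' h2'
    rw [show -S + -s = -(S + s) by ring, abs_neg, abs_neg, abs_neg] at this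
    nlinarith [this]

lemma zsaux_factA {Ω : Type*} [MeasurableSpace Ω] (Pr : Measure Ω) [IsProbabilityMeasure Pr]
    (X Y : Ω → ℝ) (hX : Measurable X) (hY : Measurable Y)
    (hInd : IndepFun X Y Pr)
    (hXt : ∀ y : ℝ, 0 ≤ y → Pr {ω | X ω > y} = ENNReal.ofReal (Real.exp (-y)))
    (hYt : ∀ y : ℝ, 0 ≤ y → Pr {ω | Y ω > y} = ENNReal.ofReal (Real.exp (-y)))
    (b1 b2 κ : ℝ) (hκ : 0 < κ) :
    1/4 * Real.exp (-(max 0 (b2 - b1)) / κ) ≤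
      (Pr {ω | b1 + κ * X ω > b2 + κ * Y ω}).toReal := by
  set a : ℝ := max 0 (b2 - b1) / κ with ha
  have ha0 : 0 ≤ a := div_nonneg (le_max_left _ _) hκ.le
  set l : ℝ := Real.log 2 with hl
  have hl0 : 0 ≤ l := Real.log_nonneg (by norm_num)
  have hexpl : Real.exp (-l) = 1/2 := by
    rw [Real.exp_neg, hl, Real.exp_log (by norm_num : (0:ℝ) < 2)]
    norm_num
  have hsub : (X ⁻¹' Set.Ioi (a + l)) ∩ (Y ⁻¹' Set.Iic l) ⊆
      {ω | b1 + κ * X ω > b2 + κ * Y ω} := by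
    rintro ω ⟨h1, h2⟩
    simp only [Set.mem_preimage, Set.mem_Ioi, Set.mem_Iic] at h1 h2
    have hκa : b2 - b1 ≤ κ * a := by
      rw [ha, mul_comm, div_mul_cancel₀ _ hκ.ne']
      exact le_max_right _ _
    have hx : κ * (a + l) < κ * X ω := mul_lt_mul_of_pos_left h1 hκ
    have hy : κ * Y ω ≤ κ * l := mul_le_mul_of_nonneg_left h2 hκ.le
    simp only [Set.mem_setOf_eq]
    nlinarith
  have hPA : Pr (X ⁻¹' Set.Ioi (a + l)) = ENNReal.ofReal (Real.exp (-(a + l))) := by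
    have he : X ⁻¹' Set.Ioi (a + l) = {ω | X ω > a + l} := rfl
    rw [he]; exact hXt _ (by linarith)
  have hPB : Pr (Y ⁻¹' Set.Iic l) = ENNReal.ofReal (1/2) := by
    have hcompl : Y ⁻¹' Set.Iic l = {ω | Y ω > l}ᶜ := by
      ext ω; simp [not_lt]
    have hmY : MeasurableSet {ω | Y ω > l} := measurableSet_lt measurable_const hY
    rw [hcompl, prob_compl_eq_one_sub hmY, hYt _ hl0, hexpl]
    rw [← ENNReal.ofReal_one, ← ENNReal.ofReal_sub _ (by norm_num : (0:ℝ) ≤ 1/2)]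
    norm_num
  have hmul := (indepFun_iff_measure_inter_preimage_eq_mul.mp hInd)
    (Set.Ioi (a + l)) (Set.Iic l) measurableSet_Ioi measurableSet_Iic
  have hle : ENNReal.ofReal (Real.exp (-(a + l)) * (1/2)) ≤
      Pr {ω | b1 + κ * X ω > b2 + κ * Y ω} := by
    rw [ENNReal.ofReal_mul (Real.exp_nonneg _), ← hPA, ← hPB, ← hmul]
    exact measure_mono hsub
  have htr := ENNReal.toReal_mono (measure_ne_top Pr _) hle
  rw [ENNReal.toReal_ofReal (by positivity)] at htr
  have hkey : Real.exp (-(a + l)) * (1/2) = 1/4 * Real.exp (-a) := by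
    rw [neg_add, Real.exp_add, hexpl]; ring
  have hrw : -(max 0 (b2 - b1)) / κ = -a := by rw [ha, neg_div]
  rw [hrw]
  linarith [hkey ▸ htr]

lemma zsaux_range_split (f : ℕ → ℝ) (t : ℕ) :
    ∑ j ∈ Finset.range (t+1), f j = f 0 + ∑ j ∈ Finset.Icc 1 t, f j := by
  induction t with
  | zero => simp
  | succ n ih =>
      rw [Finset.sum_range_succ, ih, Finset.sum_Icc_succ_top (by omega : 1 ≤ n+1)]
      ring

lemma zsaux_cum1 (s1 : ℕ → ℝ) (u : ℕ) :
    cum (sh1 s1) u = 1 + ((∑ j ∈ Finset.Icc 1 u, s1 j) + vol s1 u) := by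
  rw [cum, zsaux_range_split]
  have h0 : sh1 s1 0 = 1 := rfl
  have hs : ∑ j ∈ Finset.Icc 1 u, sh1 s1 j
      = ∑ j ∈ Finset.Icc 1 u, (s1 j + |s1 j|) := by
    refine Finset.sum_congr rfl (fun j hj => ?_)
    simp only [Finset.mem_Icc] at hj
    simp only [sh1, if_neg (by omega : j ≠ 0)]
  rw [h0, hs, Finset.sum_add_distrib, vol]

lemma zsaux_cum2 (s1 : ℕ → ℝ) (u : ℕ) :
    cum (sh2 s1) u = 1 + (-(∑ j ∈ Finset.Icc 1 u, s1 j) + vol s1 u) := by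
  rw [cum, zsaux_range_split]
  have h0 : sh2 s1 0 = 1 := rfl
  have hs : ∑ j ∈ Finset.Icc 1 u, sh2 s1 j
      = ∑ j ∈ Finset.Icc 1 u, (-s1 j + |s1 j|) := by
    refine Finset.sum_congr rfl (fun j hj => ?_)
    simp only [Finset.mem_Icc] at hj
    simp only [sh2, if_neg (by omega : j ≠ 0)]
  rw [h0, hs, Finset.sum_add_distrib, vol, Finset.sum_neg_distrib]

lemma zsaux_vmax (s1 : ℕ → ℝ) (u : ℕ) :
    vmax (sh1 s1) (sh2 s1) u = 1 + |∑ j ∈ Finset.Icc 1 u, s1 j| + vol s1 u := by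
  rw [vmax, zsaux_cum1, zsaux_cum2]
  rcases le_total 0 (∑ j ∈ Finset.Icc 1 u, s1 j) with h | h
  · rw [abs_of_nonneg h, max_eq_left (by linarith)]; ring
  · rw [abs_of_nonpos h, max_eq_right (by linarith)]; ring

/-- In a non-degenerate zero-sum game the FPL algorithm applied to the shifted experts has
expected cumulative gain
`l_{1:T} ≥ e^{−2/μ}(1−μ)·|s¹_{1:T}| − V_T·(1 − e^{−2/μ}(1−μ))` for all `T`. -/
theorem zero_sum_fpl_bound
    {Ω : Type*} [MeasurableSpace Ω] (Pr : Measure Ω) [IsProbabilityMeasure Pr]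
    (ξ : ℕ × Bool → Ω → ℝ) (hmeas : ∀ p, Measurable (ξ p))
    (hindep : iIndepFun ξ Pr)
    (htail : ∀ p, ∀ y : ℝ, 0 ≤ y → Pr {ω | ξ p ω > y} = ENNReal.ofReal (Real.exp (-y)))
    (μ : ℝ) (hμ0 : 0 < μ) (hμ1 : μ < 1)
    (s1 : ℕ → ℝ)
    (hnondeg : Tendsto (vol s1) atTop atTop)
    : ∀ T : ℕ, 1 ≤ T →
      ∑ t ∈ Finset.Icc 1 T, zsFplGain Pr ξ μ s1 t ≥
        Real.exp (-(2 / μ)) * (1 - μ) * |∑ j ∈ Finset.Icc 1 T, s1 j| -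
          vol s1 T * (1 - Real.exp (-(2 / μ)) * (1 - μ)) := by
  intro T hT
  set c : ℝ := Real.exp (-(2/μ)) * (1 - μ) with hc
  set S : ℕ → ℝ := fun n => ∑ j ∈ Finset.Icc 1 n, s1 j with hSdef
  have hSn : ∀ n, S n = ∑ j ∈ Finset.Icc 1 n, s1 j := fun n => rfl
  -- per-step bound
  have hstep : ∀ t ∈ Finset.Icc 1 T,
      c * (|S t| + |s1 t| - |S (t-1)|) - |s1 t| ≤ zsFplGain Pr ξ μ s1 t := by
    intro t ht
    simp only [Finset.mem_Icc] at ht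
    obtain ⟨ht1, _⟩ := ht
    set u : ℕ := t - 1 with hu
    have htu : t = u + 1 := by omega
    have hvol0 : (0:ℝ) ≤ vol s1 u := Finset.sum_nonneg (fun j _ => abs_nonneg _)
    have hVS : |S u| ≤ vol s1 u := by
      rw [hSn]
      exact (Finset.abs_sum_le_sum_abs _ _)
    have hκ : 0 < μ * vmax (sh1 s1) (sh2 s1) u := by
      rw [zsaux_vmax]
      have := abs_nonneg (S u)
      rw [hSn u] at this
      exact mul_pos hμ0 (by linarith)
    have hne : ((t, true) : ℕ × Bool) ≠ (t, false) := by simp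
    have hind1 : IndepFun (ξ (t, true)) (ξ (t, false)) Pr := hindep.indepFun hne
    -- probability bounds
    have h1 : 1/4 * Real.exp (-(max 0 (cum (sh2 s1) u - cum (sh1 s1) u)) /
        (μ * vmax (sh1 s1) (sh2 s1) u)) ≤
        (Pr (pick1 ξ μ (sh1 s1) (sh2 s1) t u)).toReal :=
      zsaux_factA Pr (ξ (t, true)) (ξ (t, false)) (hmeas _) (hmeas _) hind1
        (fun y hy => htail _ y hy) (fun y hy => htail _ y hy)
        (cum (sh1 s1) u) (cum (sh2 s1) u) (μ * vmax (sh1 s1) (sh2 s1) u) hκ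
    have h2raw := zsaux_factA Pr (ξ (t, false)) (ξ (t, true)) (hmeas _) (hmeas _) hind1.symm
        (fun y hy => htail _ y hy) (fun y hy => htail _ y hy)
        (cum (sh2 s1) u) (cum (sh1 s1) u) (μ * vmax (sh1 s1) (sh2 s1) u) hκ
    have hsub2 : {ω | cum (sh2 s1) u + μ * vmax (sh1 s1) (sh2 s1) u * ξ (t, false) ω >
        cum (sh1 s1) u + μ * vmax (sh1 s1) (sh2 s1) u * ξ (t, true) ω} ⊆
        (pick1 ξ μ (sh1 s1) (sh2 s1) t u)ᶜ := by
      intro ω hω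
      simp only [Set.mem_setOf_eq] at hω
      simp only [Set.mem_compl_iff, pick1, Set.mem_setOf_eq, not_lt]
      linarith
    have h2 : 1/4 * Real.exp (-(max 0 (cum (sh1 s1) u - cum (sh2 s1) u)) /
        (μ * vmax (sh1 s1) (sh2 s1) u)) ≤
        (Pr ((pick1 ξ μ (sh1 s1) (sh2 s1) t u)ᶜ)).toReal :=
      le_trans h2raw (ENNReal.toReal_mono (measure_ne_top _ _) (measure_mono hsub2))
    -- identify the complement probability
    have hEmeas : MeasurableSet (pick1 ξ μ (sh1 s1) (sh2 s1) t u) := by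
      have he : pick1 ξ μ (sh1 s1) (sh2 s1) t u =
          {ω | cum (sh2 s1) u + μ * vmax (sh1 s1) (sh2 s1) u * ξ (t, false) ω <
               cum (sh1 s1) u + μ * vmax (sh1 s1) (sh2 s1) u * ξ (t, true) ω} := rfl
      rw [he]
      exact measurableSet_lt
        (measurable_const.add (measurable_const.mul (hmeas _)))
        (measurable_const.add (measurable_const.mul (hmeas _)))
    have hcompl : (Pr ((pick1 ξ μ (sh1 s1) (sh2 s1) t u)ᶜ)).toReal =
        1 - (Pr (pick1 ξ μ (sh1 s1) (sh2 s1) t u)).toReal := by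
      rw [prob_compl_eq_one_sub hEmeas,
        ENNReal.toReal_sub_of_le prob_le_one ENNReal.one_ne_top, ENNReal.toReal_one]
    rw [hcompl] at h2
    -- rewrite differences and vmax
    have hdiff1 : cum (sh2 s1) u - cum (sh1 s1) u = -(2 * S u) := by
      rw [zsaux_cum1, zsaux_cum2, hSn]; ring
    have hdiff2 : cum (sh1 s1) u - cum (sh2 s1) u = 2 * S u := by
      rw [zsaux_cum1, zsaux_cum2, hSn]; ring
    have hvm : vmax (sh1 s1) (sh2 s1) u = 1 + |S u| + vol s1 u := by
      rw [zsaux_vmax, hSn]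
    rw [hdiff1, hvm] at h1
    rw [hdiff2, hvm] at h2
    -- probability is in [0,1]
    set P : ℝ := (Pr (pick1 ξ μ (sh1 s1) (sh2 s1) t u)).toReal with hP
    have hP0 : 0 ≤ P := ENNReal.toReal_nonneg
    have hP1 : P ≤ 1 := by
      have := ENNReal.toReal_mono ENNReal.one_ne_top
        (prob_le_one (μ := Pr) (s := pick1 ξ μ (sh1 s1) (sh2 s1) t u))
      simpa using this
    have hmain := zsaux_step μ (S u) (vol s1 u) (s1 t) P hμ0 hμ1 hVS hP0 hP1 h1 h2
    -- relate S t to S u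
    have hSt : S t = S u + s1 t := by
      rw [hSn, hSn, htu, Finset.sum_Icc_succ_top (by omega : 1 ≤ u + 1)]
    -- unfold the gain
    have hgain : zsFplGain Pr ξ μ s1 t = s1 t * (2*P - 1) := by
      simp only [zsFplGain, ← hu, ← hP, hcompl]
      ring
    rw [hgain, hSt, hc]
    linarith [hmain]
  -- sum the per-step bounds
  have hsum := Finset.sum_le_sum hstep
  -- telescoping identity
  have htel : ∀ N : ℕ, ∑ t ∈ Finset.Icc 1 N, (c * (|S t| + |s1 t| - |S (t-1)|) - |s1 t|)
      = c * |S N| + c * vol s1 N - vol s1 N := by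
    intro N
    induction N with
    | zero => simp [hSn, vol]
    | succ n ih =>
        rw [Finset.sum_Icc_succ_top (by omega : 1 ≤ n + 1), ih]
        have hv : vol s1 (n+1) = vol s1 n + |s1 (n+1)| := by
          rw [vol, vol, Finset.sum_Icc_succ_top (by omega : 1 ≤ n + 1)]
        have hn1 : (n + 1) - 1 = n := by omega
        rw [hv, hn1]
        ring
  rw [htel T] at hsum
  rw [ge_iff_le, ← hSn T]
  have : c * |S T| + c * vol s1 T - vol s1 T =
      c * |S T| - vol s1 T * (1 - c) := by ring
  rw [hc] at *
  linarith [hsum]
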